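/- Let V be a real vector space, let Σ : V × V → ℝ be a symmetric positive definite bilinear form, and let M : V × V → ℝ be a symmetric positive semidefinite bilinear form. If F, G ∈ V are linearly independent and in addition M(F,F) > 0 or M(G,G) > 0, then K(F,G) := Σ(F,F)·M(G,G) − 2·Σ(F,G)·M(F,G) + Σ(G,G)·M(F,F) > 0. -/

import Mathlib

set_option maxHeartbeats 1000000 in
/-- For a symmetric positive definite bilinear form `S` (Σ) and a symmetric
positive semidefinite bilinear form `M` on a real vector space `V`, if `F, G` are linearly
independent and moreover `M(F,F) > 0` or `M(G,G) > 0`, then the Kulkarni–Nomizu sectional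
expression `K(F,G) = Σ(F,F)·M(G,G) − 2·Σ(F,G)·M(F,G) + Σ(G,G)·M(F,F)` is strictly positive. -/
theorem kulkarni_nomizu_sectional_pos
    (V : Type*) [AddCommGroup V] [Module ℝ V]
    (S M : V →ₗ[ℝ] V →ₗ[ℝ] ℝ)
    (hSsymm : ∀ x y : V, S x y = S y x)
    (hMsymm : ∀ x y : V, M x y = M y x)
    (hSpd : ∀ x : V, x ≠ 0 → 0 < S x x)
    (hMpsd : ∀ x : V, 0 ≤ M x x)
    (F G : V) (hFG : LinearIndependent ℝ ![F, G])
    (hM : 0 < M F F ∨ 0 < M G G) :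
    0 < S F F * M G G - 2 * S F G * M F G + S G G * M F F := by
  set a := S F F with ha'
  set b := S F G with hb'
  set c := S G G with hc'
  set p := M F F with hp'
  set q := M F G with hq'
  set r := M G G with hr'
  have hF : F ≠ 0 := by
    intro h
    exact one_ne_zero (LinearIndependent.pair_iff.mp hFG 1 0 (by simp [h])).1
  have hG : G ≠ 0 := by
    intro h
    exact one_ne_zero (LinearIndependent.pair_iff.mp hFG 0 1 (by simp [h])).2
  have hapos : 0 < a := hSpd F hF
  have hcpos : 0 < c := hSpd G hG
  -- strict Cauchy–Schwarz for S
  have hw : a • G - b • F ≠ 0 := by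
    intro h
    have := (LinearIndependent.pair_iff.mp hFG (-b) a (by rw [← h]; module)).2
    exact hapos.ne' this
  have hSw := hSpd _ hw
  have hSCS : b * b < a * c := by
    have hexp : S (a • G - b • F) (a • G - b • F) = a * (a * c - b * b) := by
      simp only [map_sub, map_smul, LinearMap.sub_apply, LinearMap.smul_apply,
        smul_eq_mul]
      rw [hSsymm G F]
      ring
    rw [hexp] at hSw
    nlinarith [hSw, hapos]
  -- Cauchy–Schwarz for M
  have hppos : 0 ≤ p := hMpsd F
  have hrpos : 0 ≤ r := hMpsd G
  have hkey : ∀ t : ℝ, 0 ≤ p + 2 * t * q + t * t * r := by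
    intro t
    have h0 := hMpsd (F + t • G)
    simp only [map_add, map_smul, LinearMap.add_apply, LinearMap.smul_apply,
      smul_eq_mul] at h0
    rw [hMsymm G F] at h0
    nlinarith [h0]
  have hMCS : q * q ≤ p * r := by
    rcases eq_or_lt_of_le hrpos with hr0 | hr0
    · have hq0 : q = 0 := by
        by_contra hq0
        have h1 := hkey (-(p + 1) / (2 * q))
        have h2 : 2 * (-(p + 1) / (2 * q)) * q = -(p + 1) := by
          field_simp
        rw [← hr0, h2] at h1
        nlinarith
      rw [hq0, ← hr0]; nlinarith
    · have h1 := hkey (-(q / r))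
      have h2 : p + 2 * (-(q / r)) * q + (-(q / r)) * (-(q / r)) * r
          = p - q * q / r := by
        field_simp
        ring
      rw [h2] at h1
      have h3 : q * q / r ≤ p := by linarith
      calc q * q = q * q / r * r := by field_simp
        _ ≤ p * r := by nlinarith
  -- conclude
  rcases eq_or_ne q 0 with hq0 | hq0
  · have hbq : b * q = 0 := by rw [hq0, mul_zero]
    rcases hM with h | h
    · nlinarith [mul_pos hcpos h, mul_nonneg hapos.le hrpos]
    · nlinarith [mul_pos hapos h, mul_nonneg hcpos.le hppos]
  · have hq2 : 0 < q * q := mul_self_pos.mpr hq0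
    have hpr : 0 < p * r := lt_of_lt_of_le hq2 hMCS
    have key : (2 * b * q) * (2 * b * q) < (a * r + c * p) * (a * r + c * p) := by
      nlinarith [sq_nonneg (a * r - c * p), mul_lt_mul_of_pos_right hSCS hpr,
        mul_le_mul_of_nonneg_left hMCS (mul_self_nonneg b)]
    have hsum : 0 < a * r + c * p := by
      rcases eq_or_lt_of_le hppos with h | h
      · nlinarith
      · nlinarith [mul_pos hcpos h]
    nlinarith [key, hsum]
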